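/- The matrix X^+ whose i-th row is x_i^+ = (q_i^o)^T [I - x_{i+1}(q_{i+1}^o)^T] ··· [I - x_p(q_p^o)^T] equals the left generalized (Moore–Penrose left) inverse (X^T X)^{-1} X^T. -/

import Mathlib

open Matrix

/-- Simplified (non-normalized) Gram–Schmidt process. -/
noncomputable def gs {n p : ℕ} (x : Fin p → Fin n → ℝ) (i : Fin p) : Fin n → ℝ :=
  x i - ∑ j : Fin p, if h : j < i then ((gs x j ⬝ᵥ x i) / (gs x j ⬝ᵥ gs x j)) • gs x j else 0
termination_by i.1
decreasing_by exact h

/-- Product of the projection-style factors `[I - x_k (q_k^o)ᵀ]` over indices `k > i`,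
taken in increasing index order. -/
noncomputable def Pprod {n p : ℕ} (x : Fin p → Fin n → ℝ) (i : Fin p) :
    Matrix (Fin n) (Fin n) ℝ :=
  (((List.finRange p).filter (fun k => i < k)).map
    (fun k => (1 : Matrix (Fin n) (Fin n) ℝ) -
      vecMulVec (x k) ((gs x k ⬝ᵥ gs x k)⁻¹ • gs x k))).prod

section aux
variable {n p : ℕ} (x : Fin p → Fin n → ℝ)

lemma sum_dotProduct' {ι : Type*} (s : Finset ι) (f : ι → Fin n → ℝ) (v : Fin n → ℝ) :
    (∑ j ∈ s, f j) ⬝ᵥ v = ∑ j ∈ s, f j ⬝ᵥ v := by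
  simp only [dotProduct, Finset.sum_apply, Finset.sum_mul]
  exact Finset.sum_comm

lemma dotProduct_sum' {ι : Type*} (s : Finset ι) (f : ι → Fin n → ℝ) (v : Fin n → ℝ) :
    v ⬝ᵥ (∑ j ∈ s, f j) = ∑ j ∈ s, v ⬝ᵥ f j := by
  simp only [dotProduct, Finset.sum_apply, Finset.mul_sum]
  exact Finset.sum_comm

lemma sub_gs_mem (i : Fin p) :
    x i - gs x i ∈ Submodule.span ℝ (x '' {j | j < i}) := by
  rw [gs, sub_sub_cancel]
  apply Submodule.sum_mem
  intro j _
  split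
  · rename_i h
    apply Submodule.smul_mem
    have h1 : gs x j = x j - (x j - gs x j) := by ring
    rw [h1]
    apply Submodule.sub_mem
    · exact Submodule.subset_span ⟨j, h, rfl⟩
    · exact Submodule.span_mono
        (Set.image_mono (fun k hk => lt_trans hk h)) (sub_gs_mem j)
  · exact Submodule.zero_mem _
termination_by i.1
decreasing_by { simp only [Fin.lt_def] at *; omega }

lemma gs_mem_range (i : Fin p) : gs x i ∈ Submodule.span ℝ (Set.range x) := by
  have h1 : gs x i = x i - (x i - gs x i) := by ring
  rw [h1]
  exact Submodule.sub_mem _ (Submodule.subset_span ⟨i, rfl⟩)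
    (Submodule.span_mono (Set.image_subset_range _ _) (sub_gs_mem x i))

lemma gs_orth (hq : ∀ i : Fin p, gs x i ⬝ᵥ gs x i ≠ 0) (i j : Fin p) (hji : j < i) :
    gs x i ⬝ᵥ gs x j = 0 := by
  have heq : gs x i = x i - ∑ k : Fin p,
      if _ : k < i then ((gs x k ⬝ᵥ x i) / (gs x k ⬝ᵥ gs x k)) • gs x k else 0 := by
    rw [gs]
  rw [heq, sub_dotProduct, sum_dotProduct']
  have hsum : ∑ k : Fin p,
      (if _ : k < i then ((gs x k ⬝ᵥ x i) / (gs x k ⬝ᵥ gs x k)) • gs x k else 0) ⬝ᵥ gs x j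
      = gs x j ⬝ᵥ x i := by
    rw [Finset.sum_eq_single j]
    · rw [dif_pos hji, smul_dotProduct, smul_eq_mul, div_mul_cancel₀ _ (hq j)]
    · intro k _ hkj
      split
      · rename_i hki
        rw [smul_dotProduct, smul_eq_mul]
        rcases lt_or_gt_of_ne hkj with h | h
        · rw [dotProduct_comm (gs x k) (gs x j), gs_orth hq j k h, mul_zero]
        · rw [gs_orth hq k j h, mul_zero]
      · exact zero_dotProduct _
    · intro h; exact absurd (Finset.mem_univ j) h
  rw [hsum, dotProduct_comm (x i), sub_self]
termination_by i.1
decreasing_by all_goals (simp only [Fin.lt_def] at *; omega)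

lemma gs_dot_x (hq : ∀ i : Fin p, gs x i ⬝ᵥ gs x i ≠ 0) (i j : Fin p) (hji : j < i) :
    gs x i ⬝ᵥ x j = 0 := by
  have heq : x j = gs x j + ∑ k : Fin p,
      (if _ : k < j then ((gs x k ⬝ᵥ x j) / (gs x k ⬝ᵥ gs x k)) • gs x k else 0) := by
    rw [gs]; ring
  rw [heq, dotProduct_add, gs_orth x hq i j hji, dotProduct_sum']
  rw [Finset.sum_eq_zero, add_zero]
  intro k _
  split
  · rename_i hkj
    rw [dotProduct_smul, gs_orth x hq i k (lt_trans hkj hji), smul_zero]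
  · exact dotProduct_zero _

lemma gs_dot_x_self (hq : ∀ i : Fin p, gs x i ⬝ᵥ gs x i ≠ 0) (i : Fin p) :
    gs x i ⬝ᵥ x i = gs x i ⬝ᵥ gs x i := by
  have heq : x i = gs x i + ∑ k : Fin p,
      (if _ : k < i then ((gs x k ⬝ᵥ x i) / (gs x k ⬝ᵥ gs x k)) • gs x k else 0) := by
    rw [gs]; ring
  rw [heq, dotProduct_add, dotProduct_sum', Finset.sum_eq_zero, add_zero]
  intro k _
  split
  · rename_i hki
    rw [dotProduct_smul, gs_orth x hq i k hki, smul_zero]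
  · exact dotProduct_zero _

lemma vecMulVec_mulVec' (a b v : Fin n → ℝ) :
    vecMulVec a b *ᵥ v = (b ⬝ᵥ v) • a := by
  ext i
  simp only [mulVec, vecMulVec_apply, dotProduct, Pi.smul_apply, smul_eq_mul,
    Finset.mul_sum]
  rw [Finset.sum_mul]
  exact Finset.sum_congr rfl (fun k _ => by ring)

lemma vecMul_vecMulVec' (v a b : Fin n → ℝ) :
    v ᵥ* vecMulVec a b = (v ⬝ᵥ a) • b := by
  ext j
  simp only [vecMul, vecMulVec_apply, dotProduct, Pi.smul_apply, smul_eq_mul,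
    Finset.sum_mul]
  exact Finset.sum_congr rfl (fun k _ => by ring)

/-- The factor matrices. -/
noncomputable def Mfac (k : Fin p) : Matrix (Fin n) (Fin n) ℝ :=
  (1 : Matrix (Fin n) (Fin n) ℝ) - vecMulVec (x k) ((gs x k ⬝ᵥ gs x k)⁻¹ • gs x k)

lemma Pprod_eq (i : Fin p) :
    Pprod x i = (((List.finRange p).filter (fun k => i < k)).map (Mfac x)).prod := rfl

lemma Mfac_mulVec_lt (hq : ∀ i : Fin p, gs x i ⬝ᵥ gs x i ≠ 0) (k j : Fin p) (h : j < k) :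
    Mfac x k *ᵥ x j = x j := by
  rw [Mfac, sub_mulVec, one_mulVec, vecMulVec_mulVec', smul_dotProduct,
    gs_dot_x x hq k j h, smul_zero, zero_smul, sub_zero]

lemma Mfac_mulVec_self (hq : ∀ i : Fin p, gs x i ⬝ᵥ gs x i ≠ 0) (k : Fin p) :
    Mfac x k *ᵥ x k = 0 := by
  rw [Mfac, sub_mulVec, one_mulVec, vecMulVec_mulVec', smul_dotProduct,
    gs_dot_x_self x hq k, smul_eq_mul, inv_mul_cancel₀ (hq k), one_smul, sub_self]

lemma prodM_mulVec (hq : ∀ i : Fin p, gs x i ⬝ᵥ gs x i ≠ 0) (l : List (Fin p))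
    (j : Fin p) (hl : ∀ k ∈ l, j < k) :
    (l.map (Mfac x)).prod *ᵥ x j = x j := by
  induction l with
  | nil => simp [one_mulVec]
  | cons k t ih =>
    rw [List.map_cons, List.prod_cons, ← mulVec_mulVec,
      ih (fun m hm => hl m (List.mem_cons_of_mem _ hm)),
      Mfac_mulVec_lt x hq k j (hl k (List.mem_cons_self))]

lemma vecMul_prodM_mem (l : List (Fin p)) (v : Fin n → ℝ)
    (hv : v ∈ Submodule.span ℝ (Set.range x)) :
    v ᵥ* (l.map (Mfac x)).prod ∈ Submodule.span ℝ (Set.range x) := by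
  induction l generalizing v with
  | nil => simpa [vecMul_one] using hv
  | cons k t ih =>
    rw [List.map_cons, List.prod_cons, ← vecMul_vecMul]
    apply ih
    rw [Mfac, vecMul_sub, vecMul_one, vecMul_vecMulVec']
    exact Submodule.sub_mem _ hv
      (Submodule.smul_mem _ _ (Submodule.smul_mem _ _ (gs_mem_range x k)))

end aux

theorem generalized_inverse_closed_form {n p : ℕ} (X : Matrix (Fin n) (Fin p) ℝ)
    (x : Fin p → Fin n → ℝ) (hx : x = fun i k => X k i)
    (hli : LinearIndependent ℝ x)
    (Xplus : Matrix (Fin p) (Fin n) ℝ)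
    (hXp : Xplus = Matrix.of fun i k =>
      Matrix.vecMul ((gs x i ⬝ᵥ gs x i)⁻¹ • gs x i) (Pprod x i) k) :
    Xplus = (Xᵀ * X)⁻¹ * Xᵀ := by
  -- Gram-Schmidt vectors are nonzero
  have hq : ∀ i : Fin p, gs x i ⬝ᵥ gs x i ≠ 0 := by
    intro i h0
    have hz : gs x i = 0 := by
      funext k
      have : ∑ m, gs x i m * gs x i m = 0 := h0
      have hk := Finset.sum_eq_zero_iff_of_nonneg
        (fun m _ => mul_self_nonneg (gs x i m)) |>.mp this k (Finset.mem_univ k)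
      simpa using mul_self_eq_zero.mp hk
    have hmem : x i ∈ Submodule.span ℝ (x '' {j | j < i}) := by
      have := sub_gs_mem x i
      rwa [hz, sub_zero] at this
    exact hli.notMem_span_image (by simp) hmem
  -- rows of Xplus
  have hrow : ∀ i, Xplus i = ((gs x i ⬝ᵥ gs x i)⁻¹ • gs x i) ᵥ* Pprod x i := by
    intro i; funext k; rw [hXp]; rfl
  -- Xplus * X = 1
  have h1 : Xplus * X = 1 := by
    ext i j
    have hcol : (fun k => X k j) = x j := by rw [hx]
    have hmul : (Xplus * X) i j
        = ((gs x i ⬝ᵥ gs x i)⁻¹ • gs x i) ⬝ᵥ (Pprod x i *ᵥ x j) := by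
      rw [mul_apply, dotProduct_mulVec, ← hrow i, ← hcol]
      rfl
    rcases le_or_gt j i with hle | hlt
    · have hP : Pprod x i *ᵥ x j = x j := by
        rw [Pprod_eq]
        apply prodM_mulVec x hq
        intro k hk
        have := List.of_mem_filter hk
        exact lt_of_le_of_lt hle (by simpa using this)
      rcases eq_or_lt_of_le hle with heq | hlt'
      · subst heq
        rw [hmul, hP, smul_dotProduct, gs_dot_x_self x hq j, smul_eq_mul,
          inv_mul_cancel₀ (hq j), one_apply_eq]
      · rw [hmul, hP, smul_dotProduct, gs_dot_x x hq i j hlt', smul_zero,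
          one_apply_ne (Ne.symm (ne_of_lt hlt'))]
    · -- i < j : projection kills x j
      have hjmem : j ∈ (List.finRange p).filter (fun k => i < k) := by
        rw [List.mem_filter]
        exact ⟨List.mem_finRange j, by simpa using hlt⟩
      obtain ⟨s, t, hst⟩ := List.append_of_mem hjmem
      have hpair : ((List.finRange p).filter (fun k => i < k)).Pairwise (· < ·) :=
        List.Pairwise.sublist List.filter_sublist (List.pairwise_lt_finRange p)
      rw [hst] at hpair
      have ht : ∀ k ∈ t, j < k := by
        have := (List.pairwise_append.mp hpair).2.1
        exact (List.pairwise_cons.mp this).1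
      have hP : Pprod x i *ᵥ x j = 0 := by
        rw [Pprod_eq, hst, List.map_append, List.prod_append, List.map_cons,
          List.prod_cons, ← mulVec_mulVec, ← mulVec_mulVec,
          prodM_mulVec x hq t j ht, Mfac_mulVec_self x hq j, mulVec_zero]
      rw [hmul, hP, dotProduct_zero, one_apply_ne (ne_of_lt hlt)]
  -- rows of Xplus lie in the span of the x's
  have hspan : ∀ i, Xplus i ∈ Submodule.span ℝ (Set.range x) := by
    intro i
    rw [hrow i, Pprod_eq]
    exact vecMul_prodM_mem x _ _
      (Submodule.smul_mem _ _ (gs_mem_range x i))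
  -- extract the coefficient matrix C with Xplus = C * Xᵀ
  have hC : ∀ i, ∃ c : Fin p → ℝ, ∑ j, c j • x j = Xplus i := by
    intro i
    exact (Submodule.mem_span_range_iff_exists_fun ℝ).mp (hspan i)
  choose C hCspec using hC
  have hfac : Xplus = Matrix.of C * Xᵀ := by
    ext i k
    rw [mul_apply]
    have : Xplus i k = (∑ j, C i j • x j) k := by rw [hCspec i]
    rw [this, Finset.sum_apply]
    apply Finset.sum_congr rfl
    intro j _
    rw [Pi.smul_apply, smul_eq_mul, transpose_apply, hx]
    rfl
  have hCG : Matrix.of C * (Xᵀ * X) = 1 := by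
    rw [← Matrix.mul_assoc, ← hfac, h1]
  have hinv : (Xᵀ * X)⁻¹ = Matrix.of C := Matrix.inv_eq_left_inv hCG
  rw [hinv, ← hfac]
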